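/- Let S be a Dedekind domain, R a subring of S that is a Dedekind domain, I an ideal of S with I ∩ R ≠ {0}, and M a prime ideal of S containing I. Set e_M = v_M((M ∩ R)S). Then for every nonnegative integer l, v_{M∩R}(M^l ∩ R) = ⌈l / e_M⌉. -/

import Mathlib

/-- The `P`-adic exponent `v_P(A)` of an ideal `A`: the largest `l ∈ ℕ` such that
`A ⊆ P ^ l`. -/
noncomputable def padicExp {D : Type*} [CommRing D] (P A : Ideal D) : ℕ :=
  sSup {l : ℕ | A ≤ P ^ l}

lemma padicExp_eq_of {D : Type*} [CommRing D] {P A : Ideal D} {n : ℕ}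
    (h1 : A ≤ P ^ n) (h2 : ¬ A ≤ P ^ (n + 1)) : padicExp P A = n := by
  have hset : {l : ℕ | A ≤ P ^ l} = Set.Iic n := by
    ext l
    simp only [Set.mem_setOf_eq, Set.mem_Iic]
    constructor
    · intro hl
      by_contra hc
      push_neg at hc
      exact h2 (hl.trans (Ideal.pow_le_pow_right hc))
    · intro hl
      exact h1.trans (Ideal.pow_le_pow_right hl)
  rw [padicExp, hset, csSup_Iic]

/-- Let `S` and `R ⊆ S` be Dedekind domains, `I` an ideal of `S` with `I ∩ R ≠ 0`, `M` a
prime ideal of `S` containing `I`, and `e_M = v_M((M ∩ R)S)`. Then for every `l ∈ ℕ`,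
`v_{M ∩ R}(M ^ l ∩ R) = ⌈l / e_M⌉`. -/
theorem stmt_15 {S : Type*} [CommRing S] [IsDomain S] [IsDedekindDomain S]
    (R : Subring S) [IsDedekindDomain ↥R] (I : Ideal S)
    (hI : I.comap R.subtype ≠ ⊥) (M : Ideal S) (hM : M.IsPrime) (hIM : I ≤ M) :
    ∀ l : ℕ, padicExp (M.comap R.subtype) ((M ^ l).comap R.subtype) =
      ⌈(l : ℚ) / (padicExp M (Ideal.map R.subtype (M.comap R.subtype)) : ℚ)⌉₊ := by
  intro l
  have hinj : Function.Injective R.subtype := R.subtype_injective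
  set P : Ideal ↥R := M.comap R.subtype with hPdef
  have hP0 : P ≠ ⊥ := by
    intro h
    exact hI (le_bot_iff.mp (h ▸ Ideal.comap_mono hIM))
  have hPprime : P.IsPrime := hM.comap _
  have hM0 : M ≠ ⊥ := by
    rintro rfl
    exact hP0 (by rw [hPdef, Ideal.comap_bot_of_injective R.subtype hinj])
  have hMp : Prime M := Ideal.prime_of_isPrime hM0 hM
  have hPp : Prime P := Ideal.prime_of_isPrime hP0 hPprime
  set PS : Ideal S := P.map R.subtype with hPSdef
  have hPS0 : PS ≠ ⊥ := by
    rw [hPSdef, Ne, Ideal.map_eq_bot_iff_of_injective hinj]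
    exact hP0
  have hPSM : PS ≤ M := Ideal.map_comap_le
  have hfin : FiniteMultiplicity M PS :=
    FiniteMultiplicity.of_not_isUnit hMp.not_isUnit (by rwa [Ideal.zero_eq_bot])
  set e : ℕ := multiplicity M PS with hedef
  have he1 : PS ≤ M ^ e := Ideal.le_of_dvd (pow_multiplicity_dvd M PS)
  have he2 : ¬ PS ≤ M ^ (e + 1) := fun h =>
    hfin.not_pow_dvd_of_multiplicity_lt (lt_add_one e) (Ideal.dvd_iff_le.mpr h)
  have hee : padicExp M PS = e := padicExp_eq_of he1 he2
  have he_pos : 1 ≤ e := by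
    have := hfin.le_multiplicity_of_pow_dvd (k := 1) (by simpa using Ideal.dvd_iff_le.mpr hPSM)
    exact this
  -- key valuation identity
  have key : ∀ x : ↥R, x ≠ 0 →
      emultiplicity M (Ideal.span {(x : S)}) =
        (multiplicity P (Ideal.span {x}) * e : ℕ) := by
    intro x hx
    have hxR0 : (Ideal.span {x} : Ideal ↥R) ≠ 0 := by
      rw [Ideal.zero_eq_bot, Ne, Ideal.span_singleton_eq_bot]
      exact hx
    have hfinx : FiniteMultiplicity P (Ideal.span {x}) :=
      FiniteMultiplicity.of_not_isUnit hPp.not_isUnit hxR0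
    set m : ℕ := multiplicity P (Ideal.span {x}) with hmdef
    obtain ⟨Q, hQ⟩ : P ^ m ∣ Ideal.span {x} := pow_multiplicity_dvd P _
    have hndvd : ¬ P ∣ Q := by
      rintro ⟨c, hc⟩
      refine hfinx.not_pow_dvd_of_multiplicity_lt (lt_add_one m) ⟨c, ?_⟩
      rw [hQ, hc, pow_succ, mul_assoc]
    have hmap : Ideal.span {(x : S)} = PS ^ m * Q.map R.subtype := by
      rw [hPSdef, ← Ideal.map_pow, ← Ideal.map_mul, ← hQ, Ideal.map_span]
      simp
    have hQM : ¬ Q.map R.subtype ≤ M := by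
      intro h
      have hQP : ¬ Q ≤ P := fun h' => hndvd (Ideal.dvd_iff_le.mpr h')
      have hPmax : P.IsMaximal := hPprime.isMaximal hP0
      have hsup : P ⊔ Q = ⊤ := by
        by_contra hne
        exact hQP (by rw [hPmax.eq_of_le hne le_sup_left]; exact le_sup_right)
      have : (⊤ : Ideal S) ≤ M := by
        calc (⊤ : Ideal S) = Ideal.map R.subtype (P ⊔ Q) := by rw [hsup, Ideal.map_top]
        _ = PS ⊔ Q.map R.subtype := Ideal.map_sup _ _ _
        _ ≤ M := sup_le hPSM h
      exact hM.ne_top (top_le_iff.mp this)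
    have hQ0 : emultiplicity M (Q.map R.subtype) = 0 :=
      emultiplicity_eq_zero.mpr fun h => hQM (Ideal.le_of_dvd h)
    rw [hmap, emultiplicity_mul hMp, emultiplicity_pow hMp, hQ0,
      hfin.emultiplicity_eq_multiplicity, add_zero]
    push_cast
    ring
  -- the ceiling
  set k : ℕ := ⌈(l : ℚ) / (e : ℚ)⌉₊ with hkdef
  have harith : ∀ m : ℕ, (l ≤ m * e ↔ k ≤ m) := by
    intro m
    rw [hkdef, Nat.ceil_le, div_le_iff₀ (by exact_mod_cast he_pos)]
    exact_mod_cast Iff.rfl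
  -- the comap is exactly P ^ k
  have hcomap : (M ^ l).comap R.subtype = P ^ k := by
    ext x
    rcases eq_or_ne x 0 with rfl | hx
    · simp
    have hxR0 : (Ideal.span {x} : Ideal ↥R) ≠ 0 := by
      rw [Ideal.zero_eq_bot, Ne, Ideal.span_singleton_eq_bot]
      exact hx
    have hfinx : FiniteMultiplicity P (Ideal.span {x}) :=
      FiniteMultiplicity.of_not_isUnit hPp.not_isUnit hxR0
    have h1 : x ∈ (M ^ l).comap R.subtype ↔ (l : ℕ∞) ≤ emultiplicity M (Ideal.span {(x : S)}) := by
      rw [Ideal.mem_comap, ← Ideal.span_singleton_le_iff_mem, ← Ideal.dvd_iff_le,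
        pow_dvd_iff_le_emultiplicity]
      rfl
    have h2 : x ∈ P ^ k ↔ (k : ℕ∞) ≤ emultiplicity P (Ideal.span {x}) := by
      rw [← Ideal.span_singleton_le_iff_mem, ← Ideal.dvd_iff_le,
        pow_dvd_iff_le_emultiplicity]
    rw [h1, h2, key x hx, hfinx.emultiplicity_eq_multiplicity]
    rw [Nat.cast_le, Nat.cast_le]
    exact harith _
  rw [hcomap, hee, ← hkdef]
  refine padicExp_eq_of le_rfl ?_
  intro h
  have : (↑(k + 1) : ℕ∞) ≤ emultiplicity P (P ^ k) :=
    pow_dvd_iff_le_emultiplicity.mp (Ideal.dvd_iff_le.mpr h)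
  rw [emultiplicity_pow_self_of_prime hPp, Nat.cast_le] at this
  omega
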